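/- (Weak-to-Strong Multiplicative Error Improvement.) Let H be a real Hilbert space with a Hilbert basis (e_k) indexed by k = 1, 2, 3, …, and let λ : ℕ → ℝ be nonincreasing with λ_k ≥ 0. Let K, S be indices with S ≥ K and let T > 0. Let f* ∈ H satisfy ⟪f*, e_k⟫ = 0 for every k > K and ⟪f*, e_k⟫ = 0 whenever λ_k = 0. Let Q be the orthogonal projection onto a finite-dimensional subspace W of H and set f_teacher := Q f* (the minimizer of ‖· − f*‖ over W). Let P_S be the orthogonal projection onto span{e_1, …, e_S}. Assume f* = P_S (Q h) for some h ∈ H, and let κ ∈ (0,1] satisfy ⟪x, Q (P_S (Q x))⟫ ≥ κ·‖x‖² for every x in the range of Q ∘ P_S ∘ Q. Let f_student ∈ H satisfy ⟪f_student, e_k⟫ = (1 − e^{−λ_k T})·⟪f_teacher, e_k⟫ for every k. Then ‖f_student − f*‖² ≤ (1 − (1 − λ_{S+1}²·T²)·κ)·‖f_teacher − f*‖² + (e^{−λ_K T} / (2 − e^{−λ_K T}))·‖f*‖². -/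

import Mathlib

open scoped RealInnerProductSpace

section Aux

set_option linter.unusedSectionVars false

variable {H : Type*} [NormedAddCommGroup H] [InnerProductSpace ℝ H] [CompleteSpace H]

/-- Parseval for a real Hilbert basis. -/
lemma my_parseval (e : HilbertBasis ℕ+ ℝ H) (x : H) :
    HasSum (fun k => ⟪x, e k⟫ ^ 2) (‖x‖ ^ 2) := by
  have h := e.hasSum_inner_mul_inner x x
  rw [real_inner_self_eq_norm_sq] at h
  have hf : (fun k => ⟪x, e k⟫ ^ 2) = fun i => ⟪x, e i⟫ * ⟪e i, x⟫ := by
    funext k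
    rw [sq, real_inner_comm (e k) x]
  rw [hf]
  exact h

lemma my_symm (R : H →L[ℝ] H) (hsa : IsSelfAdjoint R) (a b : H) :
    ⟪R a, b⟫ = ⟪a, R b⟫ := hsa.isSymmetric a b

/-- selfadjoint idempotent maps are norm-contractions -/
lemma my_proj_norm_le (R : H →L[ℝ] H) (hsa : IsSelfAdjoint R) (hid : R.comp R = R) (y : H) :
    ‖R y‖ ≤ ‖y‖ := by
  have hRR : R (R y) = R y := by
    conv_rhs => rw [← hid]
    rfl
  have h1 : ⟪R y, R y⟫ = ⟪y, R y⟫ := by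
    rw [my_symm R hsa y (R y), hRR]
  have h2 : ‖R y‖ * ‖R y‖ ≤ ‖y‖ * ‖R y‖ := by
    rw [← real_inner_self_eq_norm_mul_norm, h1]
    exact real_inner_le_norm y (R y)
  rcases eq_or_lt_of_le (norm_nonneg (R y)) with h | h
  · rw [← h]; exact norm_nonneg y
  · exact le_of_mul_le_mul_right h2 h

lemma my_inner_proj (R : H →L[ℝ] H) (hsa : IsSelfAdjoint R) (hid : R.comp R = R) (y : H) :
    ⟪y, R y⟫ = ‖R y‖ ^ 2 := by
  have hRR : R (R y) = R y := by
    conv_rhs => rw [← hid]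
    rfl
  rw [← real_inner_self_eq_norm_sq, my_symm R hsa y (R y), hRR]

/-- spectral key inequality -/
lemma my_spectral_key {V : Type*} [NormedAddCommGroup V] [InnerProductSpace ℝ V]
    [FiniteDimensional ℝ V] (A : V →ₗ[ℝ] V) (hA : A.IsSymmetric) (κ : ℝ) (hκ : 0 ≤ κ)
    (hlow : ∀ x : V, κ * ‖x‖ ^ 2 ≤ ⟪x, A x⟫) (hhigh : ∀ x : V, ⟪x, A x⟫ ≤ ‖x‖ ^ 2) (u : V) :
    κ * (⟪u, A u⟫ - ⟪A u, A u⟫) ≤ ⟪A u, A u⟫ - ⟪A u, A (A u)⟫ := by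
  classical
  have hfr : Module.finrank ℝ V = Module.finrank ℝ V := rfl
  set B := hA.eigenvectorBasis hfr with hB
  set μ := hA.eigenvalues hfr with hμ
  have happ : ∀ i, A (B i) = μ i • B i := fun i => hA.apply_eigenvectorBasis hfr i
  have hBnorm : ∀ i, ‖B i‖ = 1 := fun i => B.orthonormal.1 i
  have hbounds : ∀ i, κ ≤ μ i ∧ μ i ≤ 1 := by
    intro i
    have h1 := hlow (B i)
    have h2 := hhigh (B i)
    rw [happ i, real_inner_smul_right, real_inner_self_eq_norm_sq, hBnorm i] at h1 h2
    constructor <;> nlinarith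
  have hAu : ∀ i, ⟪B i, A u⟫ = μ i * ⟪B i, u⟫ := by
    intro i
    rw [← hA (B i) u, happ i, real_inner_smul_left]
  have hAAu : ∀ i, ⟪B i, A (A u)⟫ = μ i * (μ i * ⟪B i, u⟫) := by
    intro i
    rw [← hA (B i) (A u), happ i, real_inner_smul_left, hAu i]
  have e1 : ⟪u, A u⟫ = ∑ i, μ i * ⟪B i, u⟫ ^ 2 := by
    rw [← B.sum_inner_mul_inner u (A u)]
    refine Finset.sum_congr rfl fun i _ => ?_
    rw [hAu i, real_inner_comm (B i) u]
    ring
  have e2 : ⟪A u, A u⟫ = ∑ i, μ i ^ 2 * ⟪B i, u⟫ ^ 2 := by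
    rw [← B.sum_inner_mul_inner (A u) (A u)]
    refine Finset.sum_congr rfl fun i _ => ?_
    rw [real_inner_comm (B i) (A u), hAu i]
    ring
  have e3 : ⟪A u, A (A u)⟫ = ∑ i, μ i ^ 3 * ⟪B i, u⟫ ^ 2 := by
    rw [← B.sum_inner_mul_inner (A u) (A (A u))]
    refine Finset.sum_congr rfl fun i _ => ?_
    rw [real_inner_comm (B i) (A u), hAu i, hAAu i]
    ring
  rw [e1, e2, e3, ← Finset.sum_sub_distrib, Finset.mul_sum, ← Finset.sum_sub_distrib]
  refine Finset.sum_le_sum fun i _ => ?_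
  obtain ⟨hl, hh⟩ := hbounds i
  nlinarith [sq_nonneg (⟪B i, u⟫ : ℝ),
    mul_nonneg (mul_nonneg (le_trans hκ hl) (sub_nonneg.2 hl)) (sub_nonneg.2 hh)]

/-- the per-coordinate shrinkage bound for low frequencies -/
lemma my_shrink_bound (ε εK b d : ℝ) (h0 : 0 ≤ ε) (h1 : ε ≤ εK) (h2 : εK ≤ 1) :
    ((1 - ε) * d - ε * b) ^ 2 ≤ d ^ 2 + εK / (2 - εK) * b ^ 2 := by
  have h2ε : (0:ℝ) < 2 - ε := by linarith
  have h2εK : (0:ℝ) < 2 - εK := by linarith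
  have step1 : (2 - ε) * (((1 - ε) * d - ε * b) ^ 2) ≤ (2 - ε) * d ^ 2 + ε * b ^ 2 := by
    nlinarith [sq_nonneg ((2 - ε) * d + (1 - ε) * b), h0]
  have key : ε / (2 - ε) ≤ εK / (2 - εK) := by
    rw [div_le_div_iff₀ h2ε h2εK]
    nlinarith
  have step2 : ((1 - ε) * d - ε * b) ^ 2 ≤ d ^ 2 + ε / (2 - ε) * b ^ 2 := by
    rw [← sub_nonneg]
    have : d ^ 2 + ε / (2 - ε) * b ^ 2 - ((1 - ε) * d - ε * b) ^ 2
        = ((2 - ε) * d ^ 2 + ε * b ^ 2 - (2 - ε) * (((1 - ε) * d - ε * b) ^ 2)) / (2 - ε) := by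
      field_simp
    rw [this]
    exact div_nonneg (by linarith) h2ε.le
  have := mul_le_mul_of_nonneg_right key (sq_nonneg b)
  linarith

lemma my_sq_shrink1 (c d : ℝ) (h : c ^ 2 ≤ 1) : (c * d) ^ 2 ≤ d ^ 2 := by
  nlinarith [sq_nonneg d]

lemma my_sq_shrink2 (c m d : ℝ) (h : c ^ 2 ≤ m) : (c * d) ^ 2 ≤ d ^ 2 - (1 - m) * d ^ 2 := by
  nlinarith [sq_nonneg d, mul_le_mul_of_nonneg_right h (sq_nonneg d)]

lemma my_one_sub_sq_le (x : ℝ) (h0 : 0 ≤ x) (h1 : x ≤ 1) : (1 - x) ^ 2 ≤ 1 := by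
  nlinarith

end Aux

set_option maxHeartbeats 1000000 in
/-- Weak-to-strong multiplicative error improvement. `e` is the eigenbasis of the
student kernel with nonincreasing nonnegative eigenvalues `lam`; `f*` is supported on
the top-`K` eigendirections with nonzero eigenvalues; `Q` is the orthogonal projection
onto the finite-dimensional span `W` of the teacher features, so `f_teacher = Q f*` is
the optimally trained teacher; `PS` is the orthogonal projection onto
`span {e_1, …, e_S}`; `κ` is the teacher–student feature alignment; and the student's
eigencoefficients are the teacher's shrunk by `1 − e^{−λ_k T}`. -/
theorem weakToStrong_multiplicative_improvement {H : Type*} [NormedAddCommGroup H]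
    [InnerProductSpace ℝ H] [CompleteSpace H]
    (e : HilbertBasis ℕ+ ℝ H) (lam : ℕ+ → ℝ)
    (hmono : Antitone lam) (hpos : ∀ k, 0 ≤ lam k)
    (K S : ℕ+) (hKS : K ≤ S) (T : ℝ) (hT : 0 < T)
    (fstar : H)
    (hsupp : ∀ k : ℕ+, K < k → ⟪fstar, e k⟫ = 0)
    (hzero : ∀ k : ℕ+, lam k = 0 → ⟪fstar, e k⟫ = 0)
    (W : Submodule ℝ H) (hW : FiniteDimensional ℝ W)
    (Q : H →L[ℝ] H) (hQsa : IsSelfAdjoint Q) (hQidem : Q.comp Q = Q)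
    (hQrange : LinearMap.range (Q : H →ₗ[ℝ] H) = W)
    (PS : H →L[ℝ] H) (hPSsa : IsSelfAdjoint PS) (hPSidem : PS.comp PS = PS)
    (hPSrange : LinearMap.range (PS : H →ₗ[ℝ] H) =
      Submodule.span ℝ {x : H | ∃ k : ℕ+, k ≤ S ∧ x = e k})
    (h : H) (hfstar : fstar = PS (Q h))
    (κ : ℝ) (hκ0 : 0 < κ) (hκ1 : κ ≤ 1)
    (halign : ∀ x ∈ Set.range (fun y : H => Q (PS (Q y))),
      κ * ‖x‖ ^ 2 ≤ ⟪x, Q (PS (Q x))⟫)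
    (fstudent : H)
    (hstudent : ∀ k : ℕ+,
      ⟪fstudent, e k⟫ = (1 - Real.exp (-(lam k * T))) * ⟪Q fstar, e k⟫) :
    ‖fstudent - fstar‖ ^ 2 ≤
      (1 - (1 - (lam (S + 1)) ^ 2 * T ^ 2) * κ) * ‖Q fstar - fstar‖ ^ 2 +
        (Real.exp (-(lam K * T)) / (2 - Real.exp (-(lam K * T)))) * ‖fstar‖ ^ 2 := by
  classical
  set ε : ℕ+ → ℝ := fun k => Real.exp (-(lam k * T)) with hεdef
  have hεk : ∀ k, Real.exp (-(lam k * T)) = ε k := fun _ => rfl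
  have hε_pos : ∀ k, 0 < ε k := fun k => Real.exp_pos _
  have hε_le_one : ∀ k, ε k ≤ 1 := fun k =>
    Real.exp_le_one_iff.2 (neg_nonpos.2 (mul_nonneg (hpos k) hT.le))
  set εK : ℝ := Real.exp (-(lam K * T)) with hεKdef
  have hεK_pos : 0 < εK := Real.exp_pos _
  have hεK_le_one : εK ≤ 1 := hε_le_one K
  set ρ : ℝ := εK / (2 - εK) with hρdef
  have hρ_nonneg : 0 ≤ ρ := div_nonneg hεK_pos.le (by linarith)
  set L2 : ℝ := (lam (S + 1)) ^ 2 * T ^ 2 with hL2def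
  have hL2_nonneg : 0 ≤ L2 := by positivity
  set m : ℝ := min 1 L2 with hmdef
  have hm0 : 0 ≤ m := le_min zero_le_one hL2_nonneg
  have hεmono : ∀ k : ℕ+, k ≤ K → ε k ≤ εK := by
    intro k hk
    exact Real.exp_le_exp.2 (neg_le_neg (mul_le_mul_of_nonneg_right (hmono hk) hT.le))
  have hsuppS : ∀ k : ℕ+, S < k → ⟪fstar, e k⟫ = 0 := fun k hk =>
    hsupp k (lt_of_le_of_lt hKS hk)
  -- PS coefficient facts
  have hPS_le : ∀ (x : H) (k : ℕ+), k ≤ S → ⟪PS x, e k⟫ = ⟪x, e k⟫ := by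
    intro x k hk
    have hek : e k ∈ LinearMap.range (PS : H →ₗ[ℝ] H) := by
      rw [hPSrange]
      exact Submodule.subset_span ⟨k, hk, rfl⟩
    obtain ⟨w, hw⟩ := hek
    have hw' : PS w = e k := hw
    have hPP : PS (PS x) = PS x := by
      conv_rhs => rw [← hPSidem]
      rfl
    calc ⟪PS x, e k⟫ = ⟪PS x, PS w⟫ := by rw [hw']
      _ = ⟪PS (PS x), w⟫ := (my_symm PS hPSsa (PS x) w).symm
      _ = ⟪PS x, w⟫ := by rw [hPP]
      _ = ⟪x, PS w⟫ := my_symm PS hPSsa x w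
      _ = ⟪x, e k⟫ := by rw [hw']
  have hPS_gt : ∀ (x : H) (k : ℕ+), S < k → ⟪PS x, e k⟫ = 0 := by
    intro x k hk
    have hmem : PS x ∈ Submodule.span ℝ {y : H | ∃ k' : ℕ+, k' ≤ S ∧ y = e k'} := by
      rw [← hPSrange]
      exact ⟨x, rfl⟩
    have horth : ∀ v ∈ Submodule.span ℝ {y : H | ∃ k' : ℕ+, k' ≤ S ∧ y = e k'},
        ⟪v, e k⟫ = 0 := by
      intro v hv
      induction hv using Submodule.span_induction with
      | mem y hy =>
        obtain ⟨k', hk', rfl⟩ := hy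
        exact e.orthonormal.2 (fun hne => absurd (hne ▸ hk') (not_le.2 hk))
      | zero => exact inner_zero_left _
      | add y z _ _ hy hz => rw [inner_add_left, hy, hz, add_zero]
      | smul a y _ hy => rw [real_inner_smul_left, hy, mul_zero]
    exact horth _ hmem
  -- the operator M = Q ∘ PS ∘ Q and its range V
  set M : H →L[ℝ] H := Q.comp (PS.comp Q) with hMdef
  have hMapp : ∀ x, M x = Q (PS (Q x)) := fun x => rfl
  have hQQ : ∀ x, Q (Q x) = Q x := by
    intro x
    conv_rhs => rw [← hQidem]
    rfl
  have hQadj : ContinuousLinearMap.adjoint Q = Q :=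
    ContinuousLinearMap.isSelfAdjoint_iff'.1 hQsa
  have hPSadj : ContinuousLinearMap.adjoint PS = PS :=
    ContinuousLinearMap.isSelfAdjoint_iff'.1 hPSsa
  have hMsa : IsSelfAdjoint M := by
    rw [ContinuousLinearMap.isSelfAdjoint_iff', hMdef, ContinuousLinearMap.adjoint_comp,
      ContinuousLinearMap.adjoint_comp, hQadj, hPSadj]
    ext x
    simp [ContinuousLinearMap.comp_apply]
  have hMsymm : ∀ x y, ⟪M x, y⟫ = ⟪x, M y⟫ := my_symm M hMsa
  set V : Submodule ℝ H := LinearMap.range (M : H →ₗ[ℝ] H) with hVdef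
  have hVW : V ≤ W := by
    rw [← hQrange]
    rintro x ⟨y, rfl⟩
    exact ⟨PS (Q y), rfl⟩
  haveI : FiniteDimensional ℝ V := Submodule.finiteDimensional_of_le hVW
  have hMV : ∀ x ∈ V, (M : H →ₗ[ℝ] H) x ∈ V := fun x _ => ⟨x, rfl⟩
  set A : V →ₗ[ℝ] V := (M : H →ₗ[ℝ] H).restrict hMV with hAdef
  have hAcoe : ∀ x : V, ((A x : V) : H) = M (x : H) := fun x =>
    LinearMap.restrict_coe_apply _ _ _
  have hA : A.IsSymmetric := by
    intro x y
    rw [Submodule.coe_inner, Submodule.coe_inner, hAcoe, hAcoe]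
    exact hMsymm _ _
  have hMinner_high : ∀ x : H, ⟪x, M x⟫ ≤ ‖x‖ ^ 2 := by
    intro x
    have h1 : ⟪x, M x⟫ = ⟪Q x, PS (Q x)⟫ := by
      rw [hMapp]
      exact (my_symm Q hQsa x (PS (Q x))).symm
    rw [h1, my_inner_proj PS hPSsa hPSidem (Q x)]
    have h2 : ‖PS (Q x)‖ ≤ ‖x‖ :=
      le_trans (my_proj_norm_le PS hPSsa hPSidem (Q x)) (my_proj_norm_le Q hQsa hQidem x)
    exact pow_le_pow_left₀ (norm_nonneg _) h2 2
  have hlow' : ∀ x : V, κ * ‖x‖ ^ 2 ≤ ⟪x, A x⟫ := by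
    intro x
    obtain ⟨y, hy⟩ := x.2
    have hxr : (x : H) ∈ Set.range (fun y : H => Q (PS (Q y))) := ⟨y, hy⟩
    have halx := halign _ hxr
    rw [Submodule.coe_inner, hAcoe, hMapp]
    simpa using halx
  have hhigh' : ∀ x : V, ⟪x, A x⟫ ≤ ‖x‖ ^ 2 := by
    intro x
    rw [Submodule.coe_inner, hAcoe]
    simpa using hMinner_high (x : H)
  -- orthogonal projection of h on V
  set u : V := V.orthogonalProjectionOnto h with hudef
  have hperp : h - (u : H) ∈ Vᗮ := Submodule.sub_starProjection_mem_orthogonal (K := V) h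
  have hMzero : ∀ w ∈ Vᗮ, M w = 0 := by
    intro w hw
    have h0 : ⟪M w, M w⟫ = 0 := by
      rw [hMsymm w (M w)]
      exact (Submodule.mem_orthogonal' V w).1 hw _ ⟨M w, rfl⟩
    exact inner_self_eq_zero.1 h0
  have hMu : M (u : H) = M h := by
    have h0 := hMzero _ hperp
    rw [map_sub, sub_eq_zero] at h0
    exact h0.symm
  have hzM : Q fstar = M h := by
    rw [hfstar]
    exact (hMapp h).symm
  have hAu_coe : ((A u : V) : H) = Q fstar := by rw [hAcoe, hMu, hzM]
  have hspec := my_spectral_key A hA κ hκ0.le hlow' hhigh' u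
  have hQz : Q (Q fstar) = Q fstar := hQQ fstar
  have hiAuAu : ⟪A u, A u⟫ = ‖Q fstar‖ ^ 2 := by
    rw [Submodule.coe_inner, hAu_coe, real_inner_self_eq_norm_sq]
  have hiAuAAu : ⟪A u, A (A u)⟫ = ‖PS (Q fstar)‖ ^ 2 := by
    rw [Submodule.coe_inner, hAu_coe, hAcoe, hAu_coe]
    calc ⟪Q fstar, M (Q fstar)⟫
        = ⟪Q (Q fstar), PS (Q (Q fstar))⟫ := by
          rw [hMapp]
          exact (my_symm Q hQsa _ _).symm
      _ = ⟪Q fstar, PS (Q fstar)⟫ := by rw [hQz]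
      _ = ‖PS (Q fstar)‖ ^ 2 := my_inner_proj PS hPSsa hPSidem _
  have hiuAu : ⟪u, A u⟫ = ‖fstar‖ ^ 2 := by
    rw [Submodule.coe_inner, hAu_coe]
    have hzV : Q fstar ∈ V := by
      rw [hzM]
      exact ⟨h, rfl⟩
    have hperp' : ⟪h - (u : H), Q fstar⟫ = 0 :=
      (Submodule.mem_orthogonal' V _).1 hperp _ hzV
    have huh : ⟪(u : H), Q fstar⟫ = ⟪h, Q fstar⟫ := by
      rw [inner_sub_left] at hperp'
      linarith
    rw [huh, hzM]
    calc ⟪h, M h⟫ = ⟪Q h, PS (Q h)⟫ := by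
          rw [hMapp]
          exact (my_symm Q hQsa _ _).symm
      _ = ‖PS (Q h)‖ ^ 2 := my_inner_proj PS hPSsa hPSidem _
      _ = ‖fstar‖ ^ 2 := by rw [← hfstar]
  rw [hiAuAu, hiAuAAu, hiuAu] at hspec
  have hg_norm : ‖Q fstar - fstar‖ ^ 2 = ‖fstar‖ ^ 2 - ‖Q fstar‖ ^ 2 := by
    have h1 : ⟪Q fstar, fstar⟫ = ‖Q fstar‖ ^ 2 :=
      (my_symm Q hQsa fstar fstar).trans (my_inner_proj Q hQsa hQidem fstar)
    have h2 := norm_sub_sq_real (Q fstar) fstar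
    rw [h1] at h2
    linarith
  have hτ : κ * ‖Q fstar - fstar‖ ^ 2 ≤ ‖Q fstar‖ ^ 2 - ‖PS (Q fstar)‖ ^ 2 := by
    rw [hg_norm]
    linarith
  -- Parseval sums
  have Hc := my_parseval e (fstudent - fstar)
  have Hg := my_parseval e (Q fstar - fstar)
  have Hb := my_parseval e fstar
  have Hz := my_parseval e (Q fstar)
  have HPz := my_parseval e (PS (Q fstar))
  have HPz' : HasSum (fun k => (if k ≤ S then ⟪Q fstar, e k⟫ else 0) ^ 2)
      (‖PS (Q fstar)‖ ^ 2) := by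
    have hfun : (fun k : ℕ+ => (if k ≤ S then ⟪Q fstar, e k⟫ else 0) ^ 2)
        = fun k => ⟪PS (Q fstar), e k⟫ ^ 2 := by
      funext k
      by_cases hk : k ≤ S
      · rw [if_pos hk, hPS_le _ _ hk]
      · rw [if_neg hk, hPS_gt _ _ (not_le.1 hk)]
    rw [hfun]
    exact HPz
  have Hv : HasSum (fun k : ℕ+ => if k ≤ S then (0:ℝ) else ⟪Q fstar - fstar, e k⟫ ^ 2)
      (‖Q fstar‖ ^ 2 - ‖PS (Q fstar)‖ ^ 2) := by
    have hfun : (fun k : ℕ+ => if k ≤ S then (0:ℝ) else ⟪Q fstar - fstar, e k⟫ ^ 2)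
        = fun k => ⟪Q fstar, e k⟫ ^ 2 - (if k ≤ S then ⟪Q fstar, e k⟫ else 0) ^ 2 := by
      funext k
      by_cases hk : k ≤ S
      · rw [if_pos hk, if_pos hk]
        ring
      · rw [if_neg hk, if_neg hk, inner_sub_left, hsuppS k (not_le.1 hk)]
        ring
    rw [hfun]
    exact Hz.sub HPz'
  have hsum2 : Summable (fun k : ℕ+ => if k ≤ K then ρ * ⟪fstar, e k⟫ ^ 2 else (0:ℝ)) := by
    refine Summable.of_nonneg_of_le (fun k => ?_) (fun k => ?_) ((Hb.summable).mul_left ρ)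
    · split
      · positivity
      · exact le_refl 0
    · split
      · exact le_refl _
      · positivity
  set Sig2 : ℝ := ∑' k : ℕ+, (if k ≤ K then ρ * ⟪fstar, e k⟫ ^ 2 else (0:ℝ)) with hSig2def
  have Hu2 : HasSum (fun k : ℕ+ => if k ≤ K then ρ * ⟪fstar, e k⟫ ^ 2 else (0:ℝ)) Sig2 :=
    hsum2.hasSum
  have hSig2le : Sig2 ≤ ρ * ‖fstar‖ ^ 2 := by
    refine hasSum_le (fun k => ?_) Hu2 (Hb.mul_left ρ)
    split
    · exact le_refl _
    · positivity
  have Hu : HasSum (fun k : ℕ+ => (⟪Q fstar - fstar, e k⟫ ^ 2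
        - (1 - m) * (if k ≤ S then (0:ℝ) else ⟪Q fstar - fstar, e k⟫ ^ 2))
        + (if k ≤ K then ρ * ⟪fstar, e k⟫ ^ 2 else (0:ℝ)))
      ((‖Q fstar - fstar‖ ^ 2 - (1 - m) * (‖Q fstar‖ ^ 2 - ‖PS (Q fstar)‖ ^ 2)) + Sig2) :=
    (Hg.sub (Hv.mul_left (1 - m))).add Hu2
  have hpoint : ∀ k : ℕ+, ⟪fstudent - fstar, e k⟫ ^ 2 ≤ (⟪Q fstar - fstar, e k⟫ ^ 2
        - (1 - m) * (if k ≤ S then (0:ℝ) else ⟪Q fstar - fstar, e k⟫ ^ 2))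
        + (if k ≤ K then ρ * ⟪fstar, e k⟫ ^ 2 else (0:ℝ)) := by
    intro k
    have hc : ⟪fstudent - fstar, e k⟫
        = (1 - ε k) * ⟪Q fstar - fstar, e k⟫ - ε k * ⟪fstar, e k⟫ := by
      rw [inner_sub_left, inner_sub_left, hstudent k, hεk k]
      ring
    rcases le_or_gt k S with hkS | hkS
    · rw [if_pos hkS]
      rcases le_or_gt k K with hkK | hkK
      · rw [if_pos hkK, hc]
        have hsb := my_shrink_bound (ε k) εK ⟪fstar, e k⟫ ⟪Q fstar - fstar, e k⟫
          (hε_pos k).le (hεmono k hkK) hεK_le_one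
        simp only [mul_zero, sub_zero]
        exact hsb
      · rw [if_neg (not_le.2 hkK), hc, hsupp k hkK]
        simp only [mul_zero, sub_zero, add_zero]
        exact my_sq_shrink1 _ _ (my_one_sub_sq_le (ε k) (hε_pos k).le (hε_le_one k))
    · rw [if_neg (not_le.2 hkS), if_neg (not_le.2 (lt_of_le_of_lt hKS hkS)), hc,
        hsuppS k hkS]
      simp only [mul_zero, sub_zero, add_zero]
      have hS1k : S + 1 ≤ k := by
        have h1 : (S : ℕ) + 1 ≤ (k : ℕ) := Nat.succ_le_of_lt ((PNat.coe_lt_coe S k).2 hkS)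
        have h2 : ((S + 1 : ℕ+) : ℕ) = (S : ℕ) + 1 := rfl
        rw [← PNat.coe_le_coe, h2]
        exact h1
      have hlamk : lam k ≤ lam (S + 1) := hmono hS1k
      have hexp : 1 - ε k ≤ lam k * T := by
        have hrr := Real.add_one_le_exp (-(lam k * T))
        rw [hεk k] at hrr
        linarith
      have hsq : (lam k * T) ^ 2 ≤ L2 := by
        rw [hL2def]
        have hmm : lam k * T ≤ lam (S + 1) * T := mul_le_mul_of_nonneg_right hlamk hT.le
        nlinarith [mul_nonneg (hpos k) hT.le]
      have h1e : 0 ≤ 1 - ε k := by linarith [hε_le_one k]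
      have hmin : (1 - ε k) ^ 2 ≤ m := by
        refine le_min ?_ ?_
        · nlinarith [(hε_pos k).le, hε_le_one k]
        · nlinarith
      exact my_sq_shrink2 _ _ _ hmin
  have hmain : ‖fstudent - fstar‖ ^ 2
      ≤ (‖Q fstar - fstar‖ ^ 2 - (1 - m) * (‖Q fstar‖ ^ 2 - ‖PS (Q fstar)‖ ^ 2)) + Sig2 :=
    hasSum_le hpoint Hc Hu
  have hgain : (1 - L2) * (κ * ‖Q fstar - fstar‖ ^ 2)
      ≤ (1 - m) * (‖Q fstar‖ ^ 2 - ‖PS (Q fstar)‖ ^ 2) := by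
    rcases le_or_gt 1 L2 with hL | hL
    · have hm1 : m = 1 := min_eq_left hL
      rw [hm1, sub_self, zero_mul]
      have hgz : 0 ≤ κ * ‖Q fstar - fstar‖ ^ 2 := by positivity
      nlinarith
    · have hm2 : m = L2 := min_eq_right hL.le
      rw [hm2]
      exact mul_le_mul_of_nonneg_left hτ (by linarith)
  nlinarith [hmain, hgain, hSig2le]
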